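/- Let X be a separable, locally compact metric space, let Y ⊆ X, and let π : Y → E be a coordinate patch of a differentiable structure on the metric measure space (X,d,μ). Let f : X → ℝ be Lipschitz with compact support, let ε > 0, and let ν be a Radon measure concentrated on the set Y_f of differentiability points of f. Then there exists a compact set Z ⊆ Y_f with ν(Y ∖ Z) < ε and a continuous function η : [0,∞) → [0,∞) with η(0) = 0, such that for every z ∈ Z and every r > 0, the restriction of the error function E^f_z to Z ∩ B_r(z) has Lipschitz constant at most η(r). -/

import Mathlib

open MeasureTheory Metric Topology Filter Asymptotics

open MeasureTheory Metric Topology Filter Asymptotics TopologicalSpace Set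
open scoped ENNReal NNReal RealInnerProductSpace

private lemma compact_approx {X : Type*} [MetricSpace X] [MeasurableSpace X] [BorelSpace X]
    (ν : Measure X) [IsFiniteMeasure ν] [ν.InnerRegular]
    {A : Set X} (hA : MeasurableSet A) {δ : ℝ≥0∞} (hδ : δ ≠ 0) :
    ∃ K, K ⊆ A ∧ IsCompact K ∧ ν (A \ K) < δ := by
  obtain ⟨K, h1, h2, h3⟩ := hA.exists_isCompact_lt_add (measure_ne_top ν A) hδ
  exact ⟨K, h1, h2, measure_diff_lt_of_lt_add h2.isClosed.measurableSet.nullMeasurableSet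
    h1 (measure_ne_top ν K) h3⟩

private lemma lusin {X : Type*} [MetricSpace X] [MeasurableSpace X] [BorelSpace X]
    {E : Type*} [MetricSpace E] [SecondCountableTopology E] [MeasurableSpace E] [BorelSpace E]
    (g : X → E) (hg : Measurable g) (ν : Measure X) [IsFiniteMeasure ν] [ν.InnerRegular]
    {δ : ℝ≥0∞} (hδ : δ ≠ 0) :
    ∃ L : Set X, IsCompact L ∧ ν Lᶜ < δ ∧ ContinuousOn g L := by
  cases isEmpty_or_nonempty X with
  | inl h =>
      refine ⟨∅, isCompact_empty, ?_, by simp [ContinuousOn]⟩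
      have h2 : ((∅ : Set X)ᶜ : Set X) = ∅ := by simp [Set.eq_empty_of_isEmpty]
      rw [h2, measure_empty]
      exact pos_iff_ne_zero.mpr hδ
  | inr h =>
      have hEne : Nonempty E := ⟨g h.some⟩
      set B := countableBasis E with hBdef
      have hB : IsTopologicalBasis B := isBasis_countableBasis E
      haveI : Countable ↥B := (countable_countableBasis E).to_subtype
      have hιne : Nonempty ↥B := by
        obtain ⟨t, ht, -, -⟩ := hB.mem_nhds_iff.mp (univ_mem : (univ : Set E) ∈ 𝓝 (g h.some))
        exact ⟨⟨t, ht⟩⟩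
      obtain ⟨δf, hδf0, hδfsum⟩ := ENNReal.exists_pos_sum_of_countable' hδ ↥B
      have key : ∀ i : ↥B, ∃ K K' : Set X, IsCompact K ∧ IsCompact K' ∧ K ⊆ g ⁻¹' i.1 ∧
          K' ⊆ (g ⁻¹' i.1)ᶜ ∧ ν ((K ∪ K')ᶜ) ≤ δf i := by
        intro i
        have hAim : MeasurableSet (g ⁻¹' i.1) :=
          hg (isOpen_of_mem_countableBasis i.2).measurableSet
        have hhalf : δf i / 2 ≠ 0 := (ENNReal.half_pos (hδf0 i).ne').ne'
        obtain ⟨K, hK1, hK2, hK3⟩ := compact_approx ν hAim hhalf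
        obtain ⟨K', hK'1, hK'2, hK'3⟩ := compact_approx ν hAim.compl hhalf
        refine ⟨K, K', hK2, hK'2, hK1, hK'1, ?_⟩
        have hsub : (K ∪ K')ᶜ ⊆ (g ⁻¹' i.1 \ K) ∪ ((g ⁻¹' i.1)ᶜ \ K') := by
          intro x hx
          rw [mem_compl_iff, mem_union, not_or] at hx
          by_cases hxA : x ∈ g ⁻¹' i.1
          · exact Or.inl ⟨hxA, hx.1⟩
          · exact Or.inr ⟨hxA, hx.2⟩
        calc ν ((K ∪ K')ᶜ) ≤ ν (g ⁻¹' i.1 \ K) + ν ((g ⁻¹' i.1)ᶜ \ K') :=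
              (measure_mono hsub).trans (measure_union_le _ _)
          _ ≤ δf i / 2 + δf i / 2 := add_le_add hK3.le hK'3.le
          _ = δf i := ENNReal.add_halves _
      choose K K' hK hK' hKs hK's hν using key
      refine ⟨⋂ i, (K i ∪ K' i), ?_, ?_, ?_⟩
      · exact IsCompact.of_isClosed_subset ((hK hιne.some).union (hK' hιne.some))
          (isClosed_iInter fun i => ((hK i).union (hK' i)).isClosed)
          (iInter_subset _ hιne.some)
      · calc ν ((⋂ i, (K i ∪ K' i))ᶜ) = ν (⋃ i, (K i ∪ K' i)ᶜ) := by rw [compl_iInter]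
          _ ≤ ∑' i, ν ((K i ∪ K' i)ᶜ) := measure_iUnion_le _
          _ ≤ ∑' i, δf i := ENNReal.tsum_le_tsum hν
          _ < δ := hδfsum
      · intro y hy
        rw [ContinuousWithinAt, tendsto_def]
        intro V hV
        obtain ⟨t, htB, hgy, htV⟩ := hB.mem_nhds_iff.mp hV
        set i : ↥B := ⟨t, htB⟩
        have hyKK' : y ∈ K i ∪ K' i := mem_iInter.mp hy i
        have hyK : y ∈ K i := by
          rcases hyKK' with hk | hk
          · exact hk
          · exact absurd hgy (hK's i hk)
        rw [mem_nhdsWithin]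
        refine ⟨(K' i)ᶜ, (hK' i).isClosed.isOpen_compl, fun hc => hK's i hc hgy, ?_⟩
        rintro x ⟨hx1, hx2⟩
        have hxKK' : x ∈ K i ∪ K' i := mem_iInter.mp hx2 i
        rcases hxKK' with hk | hk
        · exact htV (hKs i hk)
        · exact absurd hk hx1


/-- Uniform control of the error terms of a Cheeger–Keith differentiable
structure on a compact set of almost full measure (Lemma on uniform control of error
functions of a coordinate patch). -/
theorem stmt1 {X : Type*} [MetricSpace X] [TopologicalSpace.SeparableSpace X]
    [LocallyCompactSpace X] [MeasurableSpace X] [BorelSpace X]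
    {E : Type*} [NormedAddCommGroup E] [InnerProductSpace ℝ E] [FiniteDimensional ℝ E]
    [MeasurableSpace E] [BorelSpace E]
    (Y Yf : Set X) (hYfY : Yf ⊆ Y)
    (π : X → E) (Cπ : NNReal) (hπ : LipschitzWith Cπ π)
    (f : X → ℝ) (Cf : NNReal) (hf : LipschitzWith Cf f) (hfc : HasCompactSupport f)
    (Df : X → E) (hDf : Measurable Df)
    (hdiff : ∀ y ∈ Yf,
      (fun x => f x - f y - @inner ℝ E _ (Df y) (π x - π y)) =o[𝓝 y] (fun x => dist x y))
    (ν : Measure X) [IsFiniteMeasure ν] [ν.InnerRegular]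
    (hconc : ν Yfᶜ = 0)
    (ε : ℝ) (hε : 0 < ε) :
    ∃ Z : Set X, Z ⊆ Yf ∧ IsCompact Z ∧ ν (Y \ Z) < ENNReal.ofReal ε ∧
      ∃ η : ℝ → ℝ, Continuous η ∧ η 0 = 0 ∧ (∀ r, 0 ≤ η r) ∧
        ∀ z ∈ Z, ∀ r : ℝ, 0 < r →
          LipschitzOnWith (Real.toNNReal (η r))
            (fun x => f x - f z - @inner ℝ E _ (Df z) (π x - π z))
            (Z ∩ closedBall z r) := by
  classical
  -- Step 1: measurable core of Yf
  obtain ⟨N, hNsup, hNmeas, hNnull⟩ := exists_measurable_superset_of_null hconc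
  set S : Set X := Nᶜ with hSdef
  have hSmeas : MeasurableSet S := hNmeas.compl
  have hSYf : S ⊆ Yf := fun x hx => by
    by_contra h
    exact hx (hNsup h)
  have hScompl : ν Sᶜ = 0 := by
    rw [hSdef, compl_compl]; exact hNnull
  -- quarters of ε
  set q : ℝ≥0∞ := ENNReal.ofReal ε with hqdef
  have hq0 : q ≠ 0 := (ENNReal.ofReal_pos.mpr hε).ne'
  have hqtop : q ≠ ∞ := ENNReal.ofReal_ne_top
  set ε4 : ℝ≥0∞ := q / 4 with hε4def
  have hε4pos : 0 < ε4 := ENNReal.div_pos hq0 (by norm_num)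
  have hε4top : ε4 ≠ ∞ := by
    simp only [hε4def]
    exact (ENNReal.div_lt_top hqtop (by norm_num)).ne
  -- Step 2: Lusin for Df
  obtain ⟨L0, hL0c, hL0m, hL0cont⟩ := lusin Df hDf ν hε4pos.ne'
  set A0 : Set X := L0 ∩ S with hA0def
  have hA0meas : MeasurableSet A0 := hL0c.isClosed.measurableSet.inter hSmeas
  have hA0S : A0 ⊆ S := inter_subset_right
  -- Step 3: countable dense set and the sets B n j
  obtain ⟨D, hDc, hDd⟩ := TopologicalSpace.exists_countable_dense X
  haveI : Countable ↥D := hDc.to_subtype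
  set Bs : ℕ → ℕ → Set X := fun n j =>
    ⋂ x : D, {y | dist (x : X) y < 1 / ((n : ℝ) + 1) →
      abs (f x - f y - ⟪Df y, π (x : X) - π y⟫) ≤ (1 / ((j : ℝ) + 1)) * dist (x : X) y} with hBsdef
  have hBmeas : ∀ n j, MeasurableSet (Bs n j) := by
    intro n j
    refine MeasurableSet.iInter fun x => ?_
    have heq : {y | dist (x : X) y < 1 / ((n : ℝ) + 1) →
        abs (f x - f y - ⟪Df y, π (x : X) - π y⟫) ≤ (1 / ((j : ℝ) + 1)) * dist (x : X) y}
        = {y | dist (x : X) y < 1 / ((n : ℝ) + 1)}ᶜ ∪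
          {y | abs (f x - f y - ⟪Df y, π (x : X) - π y⟫) ≤ (1 / ((j : ℝ) + 1)) * dist (x : X) y} := by
      ext y; simp [imp_iff_not_or]
    rw [heq]
    have hm1 : Measurable fun y => abs (f x - f y - ⟪Df y, π (x : X) - π y⟫) :=
      ((measurable_const.sub hf.continuous.measurable).sub
        (hDf.inner (measurable_const.sub hπ.continuous.measurable))).abs
    refine MeasurableSet.union ?_ ?_
    · exact (measurableSet_lt ((continuous_const.dist continuous_id).measurable)
        measurable_const).compl
    · exact measurableSet_le hm1
        (measurable_const.mul ((continuous_const.dist continuous_id).measurable))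
  -- extension of the defining property of B n j from D to all of X
  have hB1 : ∀ n j y, y ∈ Bs n j → ∀ x : X, dist x y < 1 / ((n : ℝ) + 1) →
      |f x - f y - ⟪Df y, π x - π y⟫| ≤ (1 / ((j : ℝ) + 1)) * dist x y := by
    intro n j y hy x hx
    have hG : Continuous (fun x' : X => (1 / ((j : ℝ) + 1)) * dist x' y -
        abs (f x' - f y - ⟪Df y, π x' - π y⟫)) := by
      refine Continuous.sub (continuous_const.mul (continuous_id.dist continuous_const)) ?_
      exact (((hf.continuous.sub continuous_const).sub
        (continuous_const.inner (hπ.continuous.sub continuous_const)))).abs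
    have hset : IsClosed {x' : X | 0 ≤ (1 / ((j : ℝ) + 1)) * dist x' y -
        abs (f x' - f y - ⟪Df y, π x' - π y⟫)} := isClosed_le continuous_const hG
    have hsub : ball y (1 / ((n : ℝ) + 1)) ∩ D ⊆ {x' : X | 0 ≤ (1 / ((j : ℝ) + 1)) * dist x' y -
        abs (f x' - f y - ⟪Df y, π x' - π y⟫)} := by
      rintro x' ⟨hx'b, hx'D⟩
      have := mem_iInter.mp hy ⟨x', hx'D⟩ (by simpa [mem_ball] using hx'b)
      exact sub_nonneg.mpr this
    have hcl : ball y (1 / ((n : ℝ) + 1)) ⊆ closure (ball y (1 / ((n : ℝ) + 1)) ∩ D) :=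
      hDd.open_subset_closure_inter isOpen_ball
    have hxm : x ∈ {x' : X | 0 ≤ (1 / ((j : ℝ) + 1)) * dist x' y -
        abs (f x' - f y - ⟪Df y, π x' - π y⟫)} :=
      (hset.closure_subset_iff.mpr hsub) (hcl (mem_ball.mpr hx))
    have := hxm
    simp only [mem_setOf_eq, sub_nonneg] at this
    exact this
  -- S is covered by the B n j for each j
  have hB2 : ∀ j, S ⊆ ⋃ n, Bs n j := by
    intro j y hy
    have hc : (0 : ℝ) < 1 / ((j : ℝ) + 1) := by positivity
    have hev := (hdiff y (hSYf hy)).def hc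
    rw [Metric.eventually_nhds_iff] at hev
    obtain ⟨t, ht0, hts⟩ := hev
    obtain ⟨n, hn⟩ := exists_nat_one_div_lt ht0
    refine mem_iUnion.mpr ⟨n, mem_iInter.mpr fun x => fun hxd => ?_⟩
    have := hts (lt_trans hxd hn)
    simpa [Real.norm_eq_abs, abs_of_nonneg dist_nonneg] using this
  have hBmono : ∀ j, Monotone fun n => Bs n j := by
    intro j n m hnm y hy
    refine mem_iInter.mpr fun x => fun hxd => mem_iInter.mp hy x (lt_of_lt_of_le hxd ?_)
    apply one_div_le_one_div_of_le
    · positivity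
    · exact_mod_cast add_le_add_left (Nat.cast_le.mpr hnm) 1
  -- Step 4: choose n j with small exceptional measure
  obtain ⟨δf, hδf0, hδfsum⟩ := ENNReal.exists_pos_sum_of_countable' hε4pos.ne' ℕ
  have hchoice : ∀ j : ℕ, ∃ n, ν (A0 \ Bs n j) < δf j := by
    intro j
    have hanti : Antitone fun n => A0 \ Bs n j := fun n m h =>
      diff_subset_diff_right (hBmono j h)
    have htend := tendsto_measure_iInter_atTop
      (fun n => (hA0meas.diff (hBmeas n j)).nullMeasurableSet) hanti ⟨0, measure_ne_top ν _⟩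
    have hempty : ⋂ n, (A0 \ Bs n j) = ∅ := by
      rw [← diff_iUnion]
      exact diff_eq_empty.mpr (hA0S.trans (hB2 j))
    rw [hempty, measure_empty] at htend
    exact (htend.eventually_lt_const (hδf0 j)).exists
  choose nj hnj using hchoice
  -- Step 5: the measurable set A and the compact set Z
  set A : Set X := A0 ∩ ⋂ j, Bs (nj j) j with hAdef
  have hAmeas : MeasurableSet A := hA0meas.inter (MeasurableSet.iInter fun j => hBmeas _ _)
  have hA0A : ν (A0 \ A) < ε4 := by
    have hsub : A0 \ A ⊆ ⋃ j, (A0 \ Bs (nj j) j) := by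
      intro x hx
      rw [hAdef, diff_inter, diff_self, empty_union, diff_iInter] at hx
      exact hx
    calc ν (A0 \ A) ≤ ∑' j, ν (A0 \ Bs (nj j) j) :=
          (measure_mono hsub).trans (measure_iUnion_le _)
      _ ≤ ∑' j, δf j := ENNReal.tsum_le_tsum fun j => (hnj j).le
      _ < ε4 := hδfsum
  obtain ⟨Z, hZA, hZcomp, hZν⟩ := compact_approx ν hAmeas hε4pos.ne'
  have hZA0 : Z ⊆ A0 := hZA.trans inter_subset_left
  have hZS : Z ⊆ S := hZA0.trans hA0S
  have hZYf : Z ⊆ Yf := hZS.trans hSYf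
  have hZL0 : Z ⊆ L0 := hZA0.trans inter_subset_left
  have hDfZ : ContinuousOn Df Z := hL0cont.mono hZL0
  have hZB : ∀ j, Z ⊆ Bs (nj j) j := fun j =>
    (hZA.trans inter_subset_right).trans (iInter_subset _ j)
  -- Step 6: measure estimate
  have hYZ : ν (Y \ Z) < ENNReal.ofReal ε := by
    have hsub : Y \ Z ⊆ Sᶜ ∪ ((S \ A0) ∪ ((A0 \ A) ∪ (A \ Z))) := by
      intro x hx
      by_cases h1 : x ∈ S
      · by_cases h2 : x ∈ A0
        · by_cases h3 : x ∈ A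
          · exact Or.inr (Or.inr (Or.inr ⟨h3, hx.2⟩))
          · exact Or.inr (Or.inr (Or.inl ⟨h2, h3⟩))
        · exact Or.inr (Or.inl ⟨h1, h2⟩)
      · exact Or.inl h1
    have hSA0 : ν (S \ A0) < ε4 := by
      refine lt_of_le_of_lt (measure_mono ?_) hL0m
      intro x hx
      simp only [hA0def, mem_diff, mem_inter_iff, not_and] at hx
      exact fun hc => hx.2 hc hx.1
    have hchain : ν (Y \ Z) ≤ ν Sᶜ + (ν (S \ A0) + (ν (A0 \ A) + ν (A \ Z))) := by
      refine (measure_mono hsub).trans ?_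
      refine (measure_union_le _ _).trans ?_
      gcongr
      refine (measure_union_le _ _).trans ?_
      gcongr
      exact measure_union_le _ _
    rw [hScompl, zero_add] at hchain
    have h3 : ν (S \ A0) + (ν (A0 \ A) + ν (A \ Z)) < ε4 + (ε4 + ε4) :=
      ENNReal.add_lt_add hSA0 (ENNReal.add_lt_add hA0A hZν)
    refine lt_of_le_of_lt hchain (lt_of_lt_of_le h3 ?_)
    have h4 : ε4 + (ε4 + ε4) ≤ ε4 + (ε4 + (ε4 + ε4)) := by
      refine add_le_add_right (add_le_add_right ?_ _) _
      exact le_add_self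
    refine h4.trans (le_of_eq ?_)
    have : ε4 + (ε4 + (ε4 + ε4)) = 4 * ε4 := by ring
    rw [this, hε4def, ENNReal.mul_div_cancel' (by norm_num) (by norm_num)]
  -- Step 7: global Lipschitz bound for the error functions
  obtain ⟨M0, hM0⟩ := hZcomp.exists_bound_of_continuousOn hDfZ
  set M : ℝ := (Cf : ℝ) + (Cπ : ℝ) * max M0 0 with hMdef
  have hdecomp : ∀ z x y : X,
      (f x - f z - ⟪Df z, π x - π z⟫) - (f y - f z - ⟪Df z, π y - π z⟫)
      = f x - f y - ⟪Df z, π x - π y⟫ := by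
    intro z x y
    simp only [inner_sub_right]
    ring
  have hM : ∀ z ∈ Z, ∀ x y : X,
      abs ((f x - f z - ⟪Df z, π x - π z⟫) - (f y - f z - ⟪Df z, π y - π z⟫))
        ≤ M * dist x y := by
    intro z hz x y
    rw [hdecomp]
    have h1 : |f x - f y| ≤ (Cf : ℝ) * dist x y := by
      have := hf.dist_le_mul x y
      rwa [Real.dist_eq] at this
    have h2 : |⟪Df z, π x - π y⟫| ≤ ‖Df z‖ * ‖π x - π y‖ := abs_real_inner_le_norm _ _
    have h3 : ‖π x - π y‖ ≤ (Cπ : ℝ) * dist x y := by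
      have := hπ.dist_le_mul x y
      rwa [dist_eq_norm] at this
    have h4 : ‖Df z‖ ≤ max M0 0 := le_max_of_le_left (hM0 z hz)
    have h5 : |f x - f y - ⟪Df z, π x - π y⟫| ≤ |f x - f y| + |⟪Df z, π x - π y⟫| :=
      abs_sub _ _
    have h6 : ‖Df z‖ * ‖π x - π y‖ ≤ max M0 0 * ((Cπ : ℝ) * dist x y) := by
      apply mul_le_mul h4 h3 (norm_nonneg _) (le_max_right _ _)
    rw [hMdef]
    nlinarith [dist_nonneg (x := x) (y := y)]
  -- Step 8: the modulus K
  set Qs : ℝ → Set ℝ := fun r => {p | ∃ z ∈ Z, ∃ x ∈ Z ∩ closedBall z r, ∃ y ∈ Z ∩ closedBall z r,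
      x ≠ y ∧ p = abs ((f x - f z - ⟪Df z, π x - π z⟫) - (f y - f z - ⟪Df z, π y - π z⟫))
        / dist x y} with hQsdef
  have hQb : ∀ r, ∀ p ∈ insert (0 : ℝ) (Qs r), p ≤ max M 0 := by
    rintro r p (rfl | ⟨z, hz, x, hx, y, hy, hxy, rfl⟩)
    · exact le_max_right _ _
    · refine le_max_of_le_left ?_
      rw [div_le_iff₀ (dist_pos.mpr hxy)]
      exact hM z hz x y
  have hKbdd : ∀ r, BddAbove (insert (0 : ℝ) (Qs r)) := fun r => ⟨max M 0, hQb r⟩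
  set Ks : ℝ → ℝ := fun r => sSup (insert (0 : ℝ) (Qs r)) with hKsdef
  have hK0 : ∀ r, 0 ≤ Ks r := fun r => le_csSup (hKbdd r) (mem_insert 0 _)
  have hKmono : Monotone Ks := by
    intro r r' h
    refine csSup_le_csSup (hKbdd r') (insert_nonempty _ _) ?_
    apply insert_subset_insert
    rintro p ⟨z, hz, x, hx, y, hy, hxy, rfl⟩
    exact ⟨z, hz, x, ⟨hx.1, (closedBall_subset_closedBall h) hx.2⟩,
      y, ⟨hy.1, (closedBall_subset_closedBall h) hy.2⟩, hxy, rfl⟩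
  have hKq : ∀ r, ∀ p ∈ Qs r, p ≤ Ks r := fun r p hp => le_csSup (hKbdd r) (mem_insert_of_mem _ hp)
  -- Step 9: smallness of K near 0
  have hsmall : ∀ c : ℝ, 0 < c → ∃ t, 0 < t ∧ ∀ r, 0 < r → r ≤ t → Ks r ≤ c := by
    intro c hc
    obtain ⟨j, hj⟩ := exists_nat_one_div_lt (half_pos hc)
    have hUC := hZcomp.uniformContinuousOn_of_continuous hDfZ
    rw [Metric.uniformContinuousOn_iff] at hUC
    obtain ⟨t', ht'0, ht'⟩ := hUC (c / (2 * ((Cπ : ℝ) + 1))) (by positivity)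
    refine ⟨min ((1 / ((nj j : ℝ) + 1)) / 3) (t' / 2), by positivity, ?_⟩
    intro r hr0 hrt
    refine csSup_le (insert_nonempty _ _) ?_
    rintro p (rfl | ⟨z, hz, x, ⟨hxZ, hxb⟩, y, ⟨hyZ, hyb⟩, hxy, rfl⟩)
    · exact hc.le
    · rw [div_le_iff₀ (dist_pos.mpr hxy)]
      have hd : (0 : ℝ) ≤ dist x y := dist_nonneg
      have hdxy : dist x y ≤ 2 * r := by
        have h1 : dist x z ≤ r := mem_closedBall.mp hxb
        have h2 : dist y z ≤ r := mem_closedBall.mp hyb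
        calc dist x y ≤ dist x z + dist z y := dist_triangle _ _ _
          _ = dist x z + dist y z := by rw [dist_comm z y]
          _ ≤ 2 * r := by linarith
      have h1 : dist x y < 1 / ((nj j : ℝ) + 1) := by
        have := hrt.trans (min_le_left _ _)
        have h0 : (0:ℝ) < 1 / ((nj j : ℝ) + 1) := by positivity
        nlinarith
      have hEyx := hB1 (nj j) j y (hZB j hyZ) x h1
      have hDfd : dist (Df y) (Df z) < c / (2 * ((Cπ : ℝ) + 1)) := by
        refine ht' y hyZ z hz ?_
        have : r ≤ t' / 2 := hrt.trans (min_le_right _ _)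
        have := mem_closedBall.mp hyb
        linarith
      have hEd : (f x - f z - ⟪Df z, π x - π z⟫) - (f y - f z - ⟪Df z, π y - π z⟫)
          = (f x - f y - ⟪Df y, π x - π y⟫) + ⟪Df y - Df z, π x - π y⟫ := by
        simp only [inner_sub_right, inner_sub_left]
        ring
      rw [hEd]
      have hinn : |⟪Df y - Df z, π x - π y⟫| ≤ ‖Df y - Df z‖ * ‖π x - π y‖ :=
        abs_real_inner_le_norm _ _
      have hπd : ‖π x - π y‖ ≤ (Cπ : ℝ) * dist x y := by
        have := hπ.dist_le_mul x y
        rwa [dist_eq_norm] at this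
      have hDfn : ‖Df y - Df z‖ ≤ c / (2 * ((Cπ : ℝ) + 1)) := by
        rw [← dist_eq_norm]; exact hDfd.le
      have habs : |(f x - f y - ⟪Df y, π x - π y⟫) + ⟪Df y - Df z, π x - π y⟫|
          ≤ |f x - f y - ⟪Df y, π x - π y⟫| + |⟪Df y - Df z, π x - π y⟫| := abs_add_le _ _
      have hhalf : (1 / ((j : ℝ) + 1)) * dist x y ≤ (c / 2) * dist x y := by
        apply mul_le_mul_of_nonneg_right hj.le hd
      have hterm2 : ‖Df y - Df z‖ * ‖π x - π y‖ ≤ (c / 2) * dist x y := by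
        have hπn : (0:ℝ) ≤ ‖π x - π y‖ := norm_nonneg _
        have h2 : ‖Df y - Df z‖ * ‖π x - π y‖ ≤ (c / (2 * ((Cπ : ℝ) + 1))) * ((Cπ : ℝ) * dist x y) := by
          apply mul_le_mul hDfn hπd hπn (by positivity)
        refine h2.trans ?_
        rw [div_mul_eq_mul_div, div_le_iff₀ (by positivity : (0:ℝ) < 2 * ((Cπ : ℝ) + 1))]
        have hCπ : (0:ℝ) ≤ (Cπ : ℝ) := Cπ.2
        nlinarith
      calc |(f x - f y - ⟪Df y, π x - π y⟫) + ⟪Df y - Df z, π x - π y⟫|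
          ≤ |f x - f y - ⟪Df y, π x - π y⟫| + |⟪Df y - Df z, π x - π y⟫| := habs
        _ ≤ (c / 2) * dist x y + (c / 2) * dist x y := by
            refine add_le_add (hEyx.trans hhalf) (hinn.trans hterm2)
        _ = c * dist x y := by ring
  -- Step 10: the function η
  have hKint : ∀ a b : ℝ, IntervalIntegrable Ks MeasureTheory.volume a b := fun a b =>
    hKmono.intervalIntegrable
  set F : ℝ → ℝ := fun r => ∫ t in (0 : ℝ)..r, Ks t with hFdef
  have hFcont : Continuous F := intervalIntegral.continuous_primitive hKint 0
  set η : ℝ → ℝ := fun r => if r ≤ 0 then 0 else (F (2 * r) - F r) / r with hηdef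
  have hη0 : η 0 = 0 := if_pos le_rfl
  have hηval : ∀ r, 0 < r → η r = (∫ t in r..(2 * r), Ks t) / r := by
    intro r hr
    rw [hηdef]
    simp only [not_le.mpr hr, if_false]
    rw [hFdef]
    rw [intervalIntegral.integral_interval_sub_left (hKint 0 (2 * r)) (hKint 0 r)]
  have hηge : ∀ r, 0 < r → Ks r ≤ η r := by
    intro r hr
    rw [hηval r hr, le_div_iff₀ hr]
    have h1 : ∫ t in r..(2 * r), (fun _ => Ks r) t ≤ ∫ t in r..(2 * r), Ks t := by
      refine intervalIntegral.integral_mono_on (by linarith) intervalIntegrable_const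
        (hKint _ _) ?_
      intro t ht
      exact hKmono ht.1
    rw [intervalIntegral.integral_const, smul_eq_mul] at h1
    calc Ks r * r = (2 * r - r) * Ks r := by ring
      _ ≤ ∫ t in r..(2 * r), Ks t := h1
  have hηle : ∀ r, 0 < r → η r ≤ Ks (2 * r) := by
    intro r hr
    rw [hηval r hr, div_le_iff₀ hr]
    have h1 : ∫ t in r..(2 * r), Ks t ≤ ∫ t in r..(2 * r), (fun _ => Ks (2 * r)) t := by
      refine intervalIntegral.integral_mono_on (by linarith) (hKint _ _)
        intervalIntegrable_const ?_
      intro t ht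
      exact hKmono ht.2
    rw [intervalIntegral.integral_const, smul_eq_mul] at h1
    calc ∫ t in r..(2 * r), Ks t ≤ (2 * r - r) * Ks (2 * r) := h1
      _ = Ks (2 * r) * r := by ring
  have hηnn : ∀ r, 0 ≤ η r := by
    intro r
    rcases le_or_gt r 0 with h | h
    · rw [hηdef]; simp [h]
    · exact (hK0 r).trans (hηge r h)
  have hηcont : Continuous η := by
    rw [continuous_iff_continuousAt]
    intro r₀
    rcases lt_trichotomy r₀ 0 with h | h | h
    · have hev : ∀ᶠ r in 𝓝 r₀, η r = 0 := by
        filter_upwards [isOpen_Iio.mem_nhds (show r₀ ∈ Iio (0:ℝ) from h)] with r hr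
        simp only [hηdef]
        rw [if_pos (le_of_lt (mem_Iio.mp hr))]
      exact continuousAt_const.congr (by filter_upwards [hev] with r hr using hr.symm)
    · subst h
      rw [Metric.continuousAt_iff]
      intro c hc
      obtain ⟨t, ht0, hts⟩ := hsmall (c / 2) (by positivity)
      refine ⟨t / 2, by positivity, fun {r} hr => ?_⟩
      rw [Real.dist_eq, hη0, sub_zero, abs_of_nonneg (hηnn r)]
      rcases le_or_gt r 0 with h2 | h2
      · rw [hηdef]; simpa [h2] using hc
      · have hrr : r < t / 2 := by
          have := hr
          rw [Real.dist_eq, sub_zero] at this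
          exact lt_of_abs_lt this
        have h2r : 0 < 2 * r := by linarith
        have h2rt : 2 * r ≤ t := by linarith
        calc η r ≤ Ks (2 * r) := hηle r h2
          _ ≤ c / 2 := hts (2 * r) h2r h2rt
          _ < c := by linarith
    · have hgoal : ContinuousAt (fun r => (F (2 * r) - F r) / r) r₀ := by
        refine ContinuousAt.div ?_ continuousAt_id (ne_of_gt h)
        exact ((hFcont.comp (continuous_const.mul continuous_id)).sub hFcont).continuousAt
      refine hgoal.congr ?_
      filter_upwards [isOpen_Ioi.mem_nhds (show r₀ ∈ Ioi (0:ℝ) from h)] with r hr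
      rw [hηdef]
      simp [not_le.mpr (mem_Ioi.mp hr)]
  -- Step 11: conclusion
  refine ⟨Z, hZYf, hZcomp, hYZ, η, hηcont, hη0, hηnn, ?_⟩
  intro z hz r hr
  apply LipschitzOnWith.of_dist_le_mul
  intro x hx y hy
  rw [Real.dist_eq, Real.coe_toNNReal _ (hηnn r)]
  rcases eq_or_ne x y with rfl | hxy
  · simp [dist_nonneg, mul_nonneg (hηnn r) dist_nonneg]
  · have hp : abs ((f x - f z - ⟪Df z, π x - π z⟫) - (f y - f z - ⟪Df z, π y - π z⟫))
        / dist x y ∈ Qs r := ⟨z, hz, x, hx, y, hy, hxy, rfl⟩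
    have hle : abs ((f x - f z - ⟪Df z, π x - π z⟫) - (f y - f z - ⟪Df z, π y - π z⟫))
        / dist x y ≤ η r := (hKq r _ hp).trans (hηge r hr)
    rw [div_le_iff₀ (dist_pos.mpr hxy)] at hle
    exact hle
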